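/- Let H be complex-analytic near 0 ∈ ℂ² with H(0)=0, DH(0)=0, and det D²H(0) ≠ 0. Suppose Φ and Φ̃ are complex-analytic maps defined on neighborhoods of 0 in ℂ², fixing 0, each with Jacobian determinant identically equal to 1, and G, G̃ are complex-analytic functions near 0 ∈ ℂ with G(0)=G̃(0)=0, G′(0) ≠ 0 and G̃′(0) ≠ 0, such that H(Φ(u)) = G(u₁u₂) and H(Φ̃(u)) = G̃(u₁u₂) for all u = (u₁,u₂) in a neighborhood of 0. Then either G̃(h) = G(h) for all h in a neighborhood of 0, or G̃(h) = G(−h) for all h in a neighborhood of 0. -/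

import Mathlib

open Filter

/-- Jacobian determinant of a map `ℂ² → ℂ²`. -/
noncomputable def jacDet (Φ : ℂ × ℂ → ℂ × ℂ) (u : ℂ × ℂ) : ℂ :=
  (fderiv ℂ Φ u (1, 0)).1 * (fderiv ℂ Φ u (0, 1)).2 -
    (fderiv ℂ Φ u (0, 1)).1 * (fderiv ℂ Φ u (1, 0)).2

/-- Second partial derivative (Hessian bilinear form entry) of `H : ℂ² → ℂ`. -/
noncomputable def hessEntry (H : ℂ × ℂ → ℂ) (y v w : ℂ × ℂ) : ℂ :=
  fderiv ℂ (fun z => fderiv ℂ H z v) y w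

/-- Determinant of the Hessian matrix of `H : ℂ² → ℂ` at `y`. -/
noncomputable def hessDet (H : ℂ × ℂ → ℂ) (y : ℂ × ℂ) : ℂ :=
  hessEntry H y (1, 0) (1, 0) * hessEntry H y (0, 1) (0, 1) -
    hessEntry H y (1, 0) (0, 1) * hessEntry H y (0, 1) (1, 0)


open ContinuousLinearMap
section BSU

noncomputable def clmDet (L : ℂ × ℂ →L[ℂ] ℂ × ℂ) : ℂ :=
  (L (1, 0)).1 * (L (0, 1)).2 - (L (0, 1)).1 * (L (1, 0)).2


lemma clm_apply_decomp (L : ℂ × ℂ →L[ℂ] ℂ × ℂ) (v : ℂ × ℂ) :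
    L v = v.1 • L (1, 0) + v.2 • L (0, 1) := by
  have : v = v.1 • ((1 : ℂ), (0 : ℂ)) + v.2 • ((0 : ℂ), (1 : ℂ)) := by
    simp [Prod.ext_iff]
  conv_lhs => rw [this, map_add, map_smul, map_smul]

lemma clm_apply_decomp' (L : ℂ × ℂ →L[ℂ] ℂ) (v : ℂ × ℂ) :
    L v = v.1 • L (1, 0) + v.2 • L (0, 1) := by
  have : v = v.1 • ((1 : ℂ), (0 : ℂ)) + v.2 • ((0 : ℂ), (1 : ℂ)) := by
    simp [Prod.ext_iff]
  conv_lhs => rw [this, map_add, map_smul, map_smul]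

lemma analytic_zero_product {a b : ℂ → ℂ} (ha : AnalyticAt ℂ a 0) (hb : AnalyticAt ℂ b 0)
    (h : ∀ᶠ w in nhds 0, a w * b w = 0) :
    (∀ᶠ w in nhds 0, a w = 0) ∨ (∀ᶠ w in nhds 0, b w = 0) := by
  rcases ha.eventually_eq_zero_or_eventually_ne_zero with h1 | h1
  · exact Or.inl h1
  · right
    rcases hb.eventually_eq_zero_or_eventually_ne_zero with h2 | h2
    · exact h2
    · exfalso
      have h3 : ∀ᶠ w in nhdsWithin 0 {(0:ℂ)}ᶜ, a w * b w = 0 := nhdsWithin_le_nhds h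
      rcases ((h1.and h2).and h3).exists with ⟨w, ⟨hw1, hw2⟩, hw3⟩
      exact mul_ne_zero hw1 hw2 hw3

lemma slope_limit {g h : ℂ → ℂ} {g' d0 : ℂ} (hg : HasDerivAt g g' 0) (hg0 : g 0 = 0)
    (hh : ContinuousAt h 0) (heq : ∀ᶠ w in nhds 0, g w * h w = d0 * w) :
    g' * h 0 = d0 := by
  have l1 : Filter.Tendsto (fun w => g w / w * h w) (nhdsWithin 0 {(0:ℂ)}ᶜ)
      (nhds (g' * h 0)) := by
    have hs := hasDerivAt_iff_tendsto_slope.mp hg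
    have hs' : Filter.Tendsto (fun w => g w / w) (nhdsWithin 0 {(0:ℂ)}ᶜ) (nhds g') := by
      apply hs.congr'
      filter_upwards [self_mem_nhdsWithin] with w _
      rw [slope_def_field, hg0, sub_zero, sub_zero, div_eq_div_iff_comm]
    exact hs'.mul (hh.continuousWithinAt.tendsto)
  have l2 : (fun w => g w / w * h w) =ᶠ[nhdsWithin 0 {(0:ℂ)}ᶜ] fun _ => d0 := by
    have := nhdsWithin_le_nhds (a := (0:ℂ)) (s := {(0:ℂ)}ᶜ) heq
    filter_upwards [this, self_mem_nhdsWithin] with w hw hw0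
    have hw0' : w ≠ 0 := hw0
    field_simp
    linear_combination hw
  have l3 : Filter.Tendsto (fun w => g w / w * h w) (nhdsWithin 0 {(0:ℂ)}ᶜ)
      (nhds d0) := by
    rw [Filter.tendsto_congr' l2]; exact tendsto_const_nhds
  exact tendsto_nhds_unique l1 l3

lemma int_cast_eq_of_close {m n : ℤ} (h : ‖(m : ℂ) - n‖ < 1) : m = n := by
  by_contra hne
  have h2 : (1 : ℝ) ≤ ‖((m - n : ℤ) : ℂ)‖ := by
    rw [Complex.norm_intCast]
    exact_mod_cast Int.one_le_abs (by simpa [sub_eq_zero] using hne)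
  rw [Int.cast_sub] at h2
  linarith


lemma loop_integer (p q : ℂ × ℂ → ℂ) (F : ℂ → ℂ) (ε : ℝ)
    (hpan : ∀ u : ℂ × ℂ, ‖u‖ < ε → DifferentiableAt ℂ p u)
    (hmul : ∀ u : ℂ × ℂ, ‖u‖ < ε → p u * q u = F (u.1 * u.2))
    (hkey2 : ∀ u : ℂ × ℂ, ‖u‖ < ε → q u ≠ 0 → deriv F (u.1 * u.2) ≠ 0 →
        u.1 * fderiv ℂ p u (1, 0) - u.2 * fderiv ℂ p u (0, 1)
          = p u * (deriv F (u.1 * u.2))⁻¹)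
    (t : ℂ) (ht0 : t ≠ 0) (htε : Real.sqrt ‖t‖ < ε) (hFt : F t ≠ 0)
    (hdFt : deriv F t ≠ 0) :
    ∃ n : ℤ, (deriv F t)⁻¹ = n := by
  set c : ℂ := (deriv F t)⁻¹ with hc
  set s : ℂ := Complex.exp (Complex.log t / 2) with hs
  have hs2 : s * s = t := by
    rw [hs, ← Complex.exp_add]
    norm_num
    exact Complex.exp_log ht0
  have hsn : ‖s‖ = Real.sqrt ‖t‖ := by
    have h1 : ‖s‖ * ‖s‖ = ‖t‖ := by rw [← norm_mul, hs2]
    nlinarith [norm_nonneg s, Real.sq_sqrt (norm_nonneg t), Real.sqrt_nonneg ‖t‖]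
  set γ : ℝ → ℂ × ℂ := fun θ =>
    (s * Complex.exp (θ * Complex.I), s * Complex.exp (-(θ * Complex.I))) with hγ
  have hγm : ∀ θ : ℝ, (γ θ).1 * (γ θ).2 = t := by
    intro θ
    simp only [hγ]
    rw [show s * Complex.exp (θ * Complex.I) * (s * Complex.exp (-(θ * Complex.I)))
      = s * s * (Complex.exp (θ * Complex.I) * Complex.exp (-(θ * Complex.I))) by ring,
      hs2, ← Complex.exp_add]
    simp
  have hγnorm : ∀ θ : ℝ, ‖γ θ‖ < ε := by
    intro θ
    have h1 : ‖s * Complex.exp (θ * Complex.I)‖ = ‖s‖ := by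
      rw [norm_mul]
      simp [Complex.norm_exp_ofReal_mul_I]
    have h2 : ‖s * Complex.exp (-(θ * Complex.I))‖ = ‖s‖ := by
      rw [norm_mul]
      simp [Complex.norm_exp]
    rw [Prod.norm_def]
    simp only [hγ, h1, h2, max_self, hsn]
    exact htε
  -- q is nonvanishing on the loop
  have hqγ : ∀ θ : ℝ, q (γ θ) ≠ 0 := by
    intro θ h0
    have := hmul (γ θ) (hγnorm θ)
    rw [h0, mul_zero, hγm θ] at this
    exact hFt this.symm
  -- derivative of the loop
  have hγd1 : ∀ θ : ℝ, HasDerivAt (fun θ : ℝ => s * Complex.exp (θ * Complex.I))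
      (Complex.I * (s * Complex.exp (θ * Complex.I))) θ := by
    intro θ
    have h1 : HasDerivAt (fun θ : ℝ => (θ : ℂ)) 1 θ := by
      simpa using (hasDerivAt_id θ).ofReal_comp
    have h2 := ((h1.mul_const Complex.I).cexp).const_mul s
    refine h2.congr_deriv ?_
    ring
  have hγd2 : ∀ θ : ℝ, HasDerivAt (fun θ : ℝ => s * Complex.exp (-(θ * Complex.I)))
      (-(Complex.I * (s * Complex.exp (-(θ * Complex.I))))) θ := by
    intro θ
    have h1 : HasDerivAt (fun θ : ℝ => (θ : ℂ)) 1 θ := by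
      simpa using (hasDerivAt_id θ).ofReal_comp
    have h2 := (((h1.mul_const Complex.I).neg).cexp).const_mul s
    refine h2.congr_deriv ?_
    simp only [Pi.neg_apply]
    ring
  have hγd : ∀ θ : ℝ, HasDerivAt γ
      (Complex.I * (γ θ).1, -(Complex.I * (γ θ).2)) θ := by
    intro θ
    exact HasDerivAt.prodMk (hγd1 θ) (hγd2 θ)
  -- the ODE for y = p ∘ γ
  set y : ℝ → ℂ := fun θ => p (γ θ) with hy
  have hyd : ∀ θ : ℝ, HasDerivAt y (Complex.I * c * y θ) θ := by
    intro θ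
    have hfd : HasFDerivAt p (fderiv ℂ p (γ θ)) (γ θ) :=
      (hpan (γ θ) (hγnorm θ)).hasFDerivAt
    have hcomp : HasDerivAt (p ∘ γ)
        ((fderiv ℂ p (γ θ)).restrictScalars ℝ (Complex.I * (γ θ).1, -(Complex.I * (γ θ).2))) θ :=
      (hfd.restrictScalars ℝ).comp_hasDerivAt θ (hγd θ)
    have happ : (fderiv ℂ p (γ θ)).restrictScalars ℝ (Complex.I * (γ θ).1, -(Complex.I * (γ θ).2))
        = Complex.I * c * y θ := by
      have h1 : (fderiv ℂ p (γ θ)).restrictScalars ℝ (Complex.I * (γ θ).1, -(Complex.I * (γ θ).2))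
          = fderiv ℂ p (γ θ) (Complex.I * (γ θ).1, -(Complex.I * (γ θ).2)) := rfl
      rw [h1, clm_apply_decomp']
      have hk := hkey2 (γ θ) (hγnorm θ) (hqγ θ) (by rw [hγm θ]; exact hdFt)
      rw [hγm θ] at hk
      simp only [smul_eq_mul]
      rw [hy]
      rw [← hc] at hk
      calc Complex.I * (γ θ).1 * (fderiv ℂ p (γ θ)) (1, 0)
          + -(Complex.I * (γ θ).2) * (fderiv ℂ p (γ θ)) (0, 1)
          = Complex.I * ((γ θ).1 * (fderiv ℂ p (γ θ)) (1, 0)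
            - (γ θ).2 * (fderiv ℂ p (γ θ)) (0, 1)) := by ring
        _ = Complex.I * (p (γ θ) * c) := by rw [hk]
        _ = Complex.I * c * p (γ θ) := by ring
    rw [← happ]
    exact hcomp
  -- z = y * exp(-(I c) θ) is constant
  set z : ℝ → ℂ := fun θ => y θ * Complex.exp (-(Complex.I * c) * θ) with hz
  have hed : ∀ θ : ℝ, HasDerivAt (fun θ : ℝ => Complex.exp (-(Complex.I * c) * θ))
      (-(Complex.I * c) * Complex.exp (-(Complex.I * c) * θ)) θ := by
    intro θ
    have h1 : HasDerivAt (fun θ : ℝ => (θ : ℂ)) 1 θ := by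
      simpa using (hasDerivAt_id θ).ofReal_comp
    have h2 := ((h1.const_mul (-(Complex.I * c))).cexp)
    convert h2 using 1
    ring
  have hzd : ∀ θ : ℝ, HasDerivAt z 0 θ := by
    intro θ
    have := (hyd θ).mul (hed θ)
    have heq : Complex.I * c * y θ * Complex.exp (-(Complex.I * c) * θ)
        + y θ * (-(Complex.I * c) * Complex.exp (-(Complex.I * c) * θ)) = 0 := by ring
    rw [heq] at this
    exact this
  have hzconst : z (2 * Real.pi) = z 0 :=
    is_const_of_deriv_eq_zero (fun θ => (hzd θ).differentiableAt)
      (fun θ => (hzd θ).deriv) _ _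
  -- unravel
  have hexp2pi : Complex.exp (((2 * Real.pi : ℝ) : ℂ) * Complex.I) = 1 := by
    push_cast
    exact Complex.exp_two_pi_mul_I
  have hγ2pi : γ (2 * Real.pi) = γ 0 := by
    simp only [hγ]
    rw [Prod.ext_iff]
    constructor <;> simp [Complex.exp_neg, hexp2pi]
  have hy2pi : y (2 * Real.pi) = y 0 := by
    simp only [hy, hγ2pi]
  have hy0 : y 0 ≠ 0 := by
    intro h0
    have := hmul (γ 0) (hγnorm 0)
    rw [hγm 0] at this
    simp only [hy] at h0
    rw [h0, zero_mul] at this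
    exact hFt this.symm
  have hzeq : y 0 * Complex.exp (-(Complex.I * c) * ((2 * Real.pi : ℝ) : ℂ)) = y 0 := by
    have h2 := hzconst
    simp only [hz] at h2
    rw [hy2pi] at h2
    simpa using h2
  have hexp1 : Complex.exp (-(Complex.I * c) * ((2 * Real.pi : ℝ) : ℂ)) = 1 :=
    mul_left_cancel₀ hy0 (hzeq.trans (mul_one (y 0)).symm)
  rw [Complex.exp_eq_one_iff] at hexp1
  obtain ⟨n, hn⟩ := hexp1
  refine ⟨-n, ?_⟩
  have hπ : ((Real.pi : ℂ)) ≠ 0 := by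
    simp [Complex.ofReal_ne_zero, Real.pi_ne_zero]
  have hI : Complex.I ≠ 0 := Complex.I_ne_zero
  push_cast at hn
  have h3 : (-c - n) * (2 * (Real.pi : ℂ) * Complex.I) = 0 := by linear_combination hn
  rcases mul_eq_zero.mp h3 with h4 | h4
  · rw [Int.cast_neg]
    linear_combination -h4
  · exfalso
    rcases mul_eq_zero.mp h4 with h5 | h5
    · rcases mul_eq_zero.mp h5 with h6 | h6
      · norm_num at h6
      · exact hπ h6
    · exact hI h5

lemma const_deriv (F : ℂ → ℂ) (hF : AnalyticAt ℂ F 0) (hF0 : F 0 = 0)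
    (hd0 : deriv F 0 ≠ 0)
    (hint : ∀ᶠ t in nhdsWithin 0 {(0:ℂ)}ᶜ, ∃ n : ℤ, (deriv F t)⁻¹ = n) :
    ∀ᶠ t in nhds 0, F t = deriv F 0 * t := by
  have hdc : ContinuousAt (deriv F) 0 := by
    have h1 : ContinuousAt (fderiv ℂ F) 0 := hF.fderiv.continuousAt
    have h2 : ContinuousAt (fun t => fderiv ℂ F t 1) 0 :=
      (ContinuousLinearMap.apply ℂ ℂ (1:ℂ)).continuous.continuousAt.comp h1
    have h3 : (fun t => fderiv ℂ F t 1) = deriv F := by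
      funext t; rw [fderiv_apply_one_eq_deriv]
    rwa [h3] at h2
  have hinv : ContinuousAt (fun t => (deriv F t)⁻¹) 0 := hdc.inv₀ hd0
  have hne : ∀ᶠ t in nhds (0:ℂ), deriv F t ≠ 0 := hdc.eventually_ne hd0
  set c0 : ℂ := (deriv F 0)⁻¹ with hc0
  have hball : ∀ᶠ t in nhds (0:ℂ), ‖(deriv F t)⁻¹ - c0‖ < 1/4 := by
    have h1 : Filter.Tendsto (fun t => (deriv F t)⁻¹) (nhds 0) (nhds c0) := hinv.tendsto
    have h2 := Metric.tendsto_nhds.mp h1 (1/4) (by norm_num)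
    simpa [dist_eq_norm] using h2
  have hev := hint.and ((hball.filter_mono nhdsWithin_le_nhds).and (hne.filter_mono nhdsWithin_le_nhds))
  haveI : Filter.NeBot (nhdsWithin (0:ℂ) {(0:ℂ)}ᶜ) := by
    exact Module.punctured_nhds_neBot ℂ ℂ 0
  obtain ⟨t₀, ⟨n₀, hn₀⟩, hb₀, hne₀⟩ := hev.exists
  have hevconst : ∀ᶠ t in nhdsWithin 0 {(0:ℂ)}ᶜ, deriv F t = ((n₀ : ℂ))⁻¹ := by
    filter_upwards [hev] with t ⟨⟨n, hn⟩, hb, hnet⟩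
    have hdist : ‖(n : ℂ) - n₀‖ < 1 := by
      calc ‖(n:ℂ) - n₀‖ = ‖((deriv F t)⁻¹ - c0) + (c0 - (deriv F t₀)⁻¹)‖ := by
            rw [← hn, ← hn₀]; ring_nf
        _ ≤ ‖(deriv F t)⁻¹ - c0‖ + ‖c0 - (deriv F t₀)⁻¹‖ := norm_add_le _ _
        _ < 1/4 + 1/4 := add_lt_add hb (by rw [norm_sub_rev]; exact hb₀)
        _ < 1 := by norm_num
    have hnn : n = n₀ := int_cast_eq_of_close hdist
    have : (deriv F t)⁻¹ = ((n₀ : ℤ) : ℂ) := by rw [← hnn]; exact hn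
    rw [← this, inv_inv]
  have hd0n : deriv F 0 = ((n₀ : ℂ))⁻¹ := by
    have h1 : Filter.Tendsto (deriv F) (nhdsWithin 0 {(0:ℂ)}ᶜ) (nhds (deriv F 0)) :=
      (hdc.continuousWithinAt).tendsto
    have h2 : Filter.Tendsto (deriv F) (nhdsWithin 0 {(0:ℂ)}ᶜ) (nhds (((n₀ : ℂ))⁻¹)) := by
      rw [Filter.tendsto_congr' hevconst]
      exact tendsto_const_nhds
    exact tendsto_nhds_unique h1 h2
  have hevd : ∀ᶠ t in nhds (0:ℂ), deriv F t = deriv F 0 := by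
    rw [eventually_nhdsWithin_iff] at hevconst
    filter_upwards [hevconst] with t ht
    by_cases h : t = 0
    · rw [h]
    · rw [ht h, hd0n]
  -- now conclude F t = deriv F 0 * t on a ball
  obtain ⟨ε, hε, hball2⟩ := Metric.eventually_nhds_iff_ball.mp (hF.eventually_analyticAt.and hevd)
  have hconv : Convex ℝ (Metric.ball (0:ℂ) ε) := convex_ball 0 ε
  set g : ℂ → ℂ := fun t => F t - deriv F 0 * t with hg
  have hgd : ∀ t ∈ Metric.ball (0:ℂ) ε, HasDerivAt g 0 t := by
    intro t ht
    obtain ⟨hFa, hFd⟩ := hball2 t ht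
    have h1 : HasDerivAt F (deriv F t) t := hFa.differentiableAt.hasDerivAt
    have h2 : HasDerivAt (fun t : ℂ => deriv F 0 * t) (deriv F 0) t := by
      simpa using (hasDerivAt_id t).const_mul (deriv F 0)
    have := h1.sub h2
    rw [hFd, sub_self] at this
    exact this
  have hgdiff : DifferentiableOn ℂ g (Metric.ball (0:ℂ) ε) :=
    fun t ht => ((hgd t ht).differentiableAt).differentiableWithinAt
  have hgzero : ∀ t ∈ Metric.ball (0:ℂ) ε, fderivWithin ℂ g (Metric.ball (0:ℂ) ε) t = 0 := by
    intro t ht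
    rw [fderivWithin_of_isOpen Metric.isOpen_ball ht]
    have := (hgd t ht).hasFDerivAt.fderiv
    rw [this]
    ext v
    simp
  have h0m : (0:ℂ) ∈ Metric.ball (0:ℂ) ε := Metric.mem_ball_self hε
  have hconst : ∀ t ∈ Metric.ball (0:ℂ) ε, g t = g 0 :=
    fun t ht => hconv.is_const_of_fderivWithin_eq_zero hgdiff hgzero ht h0m
  filter_upwards [Metric.ball_mem_nhds 0 hε] with t ht
  have := hconst t ht
  simp only [hg, hF0] at this
  linear_combination this


lemma axis_sign (p q : ℂ × ℂ → ℂ) (F : ℂ → ℂ)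
    (hp : AnalyticAt ℂ p 0) (hq : AnalyticAt ℂ q 0) (hF : AnalyticAt ℂ F 0)
    (hp0 : p 0 = 0) (hq0 : q 0 = 0) (hF0 : F 0 = 0) (hF'0 : deriv F 0 ≠ 0)
    (hmul : ∀ᶠ u in nhds 0, p u * q u = F (u.1 * u.2))
    (key : ∀ᶠ u in nhds (0 : ℂ × ℂ),
      (p u * q u = F (u.1 * u.2)) ∧
      (p u * (fderiv ℂ q u (1,0)) + q u * (fderiv ℂ p u (1,0)) = deriv F (u.1 * u.2) * u.2) ∧
      (p u * (fderiv ℂ q u (0,1)) + q u * (fderiv ℂ p u (0,1)) = deriv F (u.1 * u.2) * u.1))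
    (hjac : ∀ᶠ u in nhds 0, fderiv ℂ p u (1,0) * fderiv ℂ q u (0,1)
        - fderiv ℂ q u (1,0) * fderiv ℂ p u (0,1) = 1) :
    deriv F 0 = 1 ∨ deriv F 0 = -1 := by
  -- curves
  have hι1a : AnalyticAt ℂ (fun w : ℂ => ((w, 0) : ℂ × ℂ)) 0 :=
    (analyticAt_id.prod analyticAt_const)
  have hι2a : AnalyticAt ℂ (fun w : ℂ => ((0, w) : ℂ × ℂ)) 0 :=
    (analyticAt_const.prod analyticAt_id)
  have hι1t : Filter.Tendsto (fun w : ℂ => ((w, 0) : ℂ × ℂ)) (nhds 0) (nhds 0) :=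
    hι1a.continuousAt.tendsto
  have hι2t : Filter.Tendsto (fun w : ℂ => ((0, w) : ℂ × ℂ)) (nhds 0) (nhds 0) :=
    hι2a.continuousAt.tendsto
  -- derivatives along axes
  have haxis1 : ∀ f : ℂ × ℂ → ℂ, AnalyticAt ℂ f 0 →
      HasDerivAt (fun w : ℂ => f (w, 0)) (fderiv ℂ f 0 (1, 0)) 0 := by
    intro f hf
    have hc : HasDerivAt (fun w : ℂ => ((w, 0) : ℂ × ℂ)) ((1 : ℂ), (0 : ℂ)) 0 :=
      HasDerivAt.prodMk (hasDerivAt_id (0:ℂ)) (hasDerivAt_const (0:ℂ) (0:ℂ))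
    have h2 : HasDerivAt (f ∘ fun w : ℂ => ((w, 0) : ℂ × ℂ)) (fderiv ℂ f 0 (1, 0)) 0 :=
      HasFDerivAt.comp_hasDerivAt _ (by exact hf.differentiableAt.hasFDerivAt) hc
    simpa [Function.comp_def] using h2
  have haxis2 : ∀ f : ℂ × ℂ → ℂ, AnalyticAt ℂ f 0 →
      HasDerivAt (fun w : ℂ => f (0, w)) (fderiv ℂ f 0 (0, 1)) 0 := by
    intro f hf
    have hc : HasDerivAt (fun w : ℂ => ((0, w) : ℂ × ℂ)) ((0 : ℂ), (1 : ℂ)) 0 :=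
      HasDerivAt.prodMk (hasDerivAt_const (0:ℂ) (0:ℂ)) (hasDerivAt_id (0:ℂ))
    have h2 : HasDerivAt (f ∘ fun w : ℂ => ((0, w) : ℂ × ℂ)) (fderiv ℂ f 0 (0, 1)) 0 :=
      HasFDerivAt.comp_hasDerivAt _ (by exact hf.differentiableAt.hasFDerivAt) hc
    simpa [Function.comp_def] using h2
  -- zero products on the axes
  have hax1 : (∀ᶠ w in nhds (0:ℂ), p (w, 0) = 0) ∨ (∀ᶠ w in nhds (0:ℂ), q (w, 0) = 0) := by
    apply analytic_zero_product (hp.comp_of_eq hι1a rfl) (hq.comp_of_eq hι1a rfl)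
    filter_upwards [hι1t.eventually hmul] with w hw
    simpa [hF0] using hw
  have hax2 : (∀ᶠ w in nhds (0:ℂ), p (0, w) = 0) ∨ (∀ᶠ w in nhds (0:ℂ), q (0, w) = 0) := by
    apply analytic_zero_product (hp.comp_of_eq hι2a rfl) (hq.comp_of_eq hι2a rfl)
    filter_upwards [hι2t.eventually hmul] with w hw
    simpa [hF0] using hw
  -- vanishing on axis gives vanishing partial at 0
  have hvan1 : ∀ f : ℂ × ℂ → ℂ, AnalyticAt ℂ f 0 → (∀ᶠ w in nhds (0:ℂ), f (w, 0) = 0) →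
      fderiv ℂ f 0 (1, 0) = 0 := by
    intro f hf hev
    have h1 : deriv (fun w : ℂ => f (w, 0)) 0 = deriv (fun _ : ℂ => (0:ℂ)) 0 :=
      Filter.EventuallyEq.deriv_eq hev
    rw [(haxis1 f hf).deriv] at h1
    simpa using h1
  have hvan2 : ∀ f : ℂ × ℂ → ℂ, AnalyticAt ℂ f 0 → (∀ᶠ w in nhds (0:ℂ), f (0, w) = 0) →
      fderiv ℂ f 0 (0, 1) = 0 := by
    intro f hf hev
    have h1 : deriv (fun w : ℂ => f (0, w)) 0 = deriv (fun _ : ℂ => (0:ℂ)) 0 :=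
      Filter.EventuallyEq.deriv_eq hev
    rw [(haxis2 f hf).deriv] at h1
    simpa using h1
  have j0 : fderiv ℂ p 0 (1,0) * fderiv ℂ q 0 (0,1)
      - fderiv ℂ q 0 (1,0) * fderiv ℂ p 0 (0,1) = 1 := hjac.self_of_nhds
  -- continuity of partials
  have hPcont : ∀ (f : ℂ × ℂ → ℂ), AnalyticAt ℂ f 0 → ∀ v : ℂ × ℂ,
      ContinuousAt (fun u => fderiv ℂ f u v) 0 := by
    intro f hf v
    have h1 : ContinuousAt (fderiv ℂ f) 0 := hf.fderiv.continuousAt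
    exact ((ContinuousLinearMap.apply ℂ ℂ v).continuous.continuousAt.comp h1)
  rcases hax1 with hA1 | hB1 <;> rcases hax2 with hA2 | hB2
  · -- p vanishes on both axes: contradiction
    exfalso
    rw [hvan1 p hp hA1, hvan2 p hp hA2] at j0
    simp at j0
  · -- case B : p (·,0) = 0, q (0,·) = 0  ⇒ deriv F 0 = -1
    right
    have hP1 : fderiv ℂ p 0 (1,0) = 0 := hvan1 p hp hA1
    have hQ2 : fderiv ℂ q 0 (0,1) = 0 := hvan2 q hq hB2
    -- q(w,0) * P2(w,0) = d0 * w  eventually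
    have heq : ∀ᶠ w in nhds (0:ℂ), q (w,0) * (fun w : ℂ => fderiv ℂ p (w,0) (0,1)) w
        = deriv F 0 * w := by
      filter_upwards [hι1t.eventually key, hA1] with w hk hp1
      have e3 := hk.2.2
      simpa [hp1] using e3
    have hhc : ContinuousAt (fun w : ℂ => fderiv ℂ p (w,0) (0,1)) 0 := by
      have := ContinuousAt.comp (g := fun u : ℂ × ℂ => fderiv ℂ p u (0,1))
        (f := fun w : ℂ => ((w, 0) : ℂ × ℂ)) (x := (0:ℂ)) (hPcont p hp (0,1)) hι1a.continuousAt
      simpa [Function.comp_def] using this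
    have hlim := slope_limit (haxis1 q hq) (by exact hq0) hhc heq
    have h0 : ((0:ℂ), (0:ℂ)) = (0 : ℂ × ℂ) := rfl
    rw [h0] at hlim
    rw [hP1, hQ2] at j0
    linear_combination -j0 - hlim
  · -- case A : q (·,0) = 0, p (0,·) = 0 ⇒ deriv F 0 = 1
    left
    have hP2 : fderiv ℂ p 0 (0,1) = 0 := hvan2 p hp hA2
    have hQ1 : fderiv ℂ q 0 (1,0) = 0 := hvan1 q hq hB1
    have heq : ∀ᶠ w in nhds (0:ℂ), q (0,w) * (fun w : ℂ => fderiv ℂ p (0,w) (1,0)) w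
        = deriv F 0 * w := by
      filter_upwards [hι2t.eventually key, hA2] with w hk hp1
      have e2 := hk.2.1
      simpa [hp1] using e2
    have hhc : ContinuousAt (fun w : ℂ => fderiv ℂ p (0,w) (1,0)) 0 := by
      have := ContinuousAt.comp (g := fun u : ℂ × ℂ => fderiv ℂ p u (1,0))
        (f := fun w : ℂ => ((0, w) : ℂ × ℂ)) (x := (0:ℂ)) (hPcont p hp (1,0)) hι2a.continuousAt
      simpa [Function.comp_def] using this
    have hlim := slope_limit (haxis2 q hq) (by exact hq0) hhc heq
    have h0 : ((0:ℂ), (0:ℂ)) = (0 : ℂ × ℂ) := rfl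
    rw [h0] at hlim
    rw [hP2, hQ1] at j0
    linear_combination j0 - hlim
  · -- q vanishes on both axes: contradiction
    exfalso
    rw [hvan1 q hq hB1, hvan2 q hq hB2] at j0
    simp at j0

lemma core (p q : ℂ × ℂ → ℂ) (F : ℂ → ℂ)
    (hp : AnalyticAt ℂ p 0) (hq : AnalyticAt ℂ q 0) (hF : AnalyticAt ℂ F 0)
    (hp0 : p 0 = 0) (hq0 : q 0 = 0) (hF0 : F 0 = 0) (hF'0 : deriv F 0 ≠ 0)
    (hmul : ∀ᶠ u in nhds 0, p u * q u = F (u.1 * u.2))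
    (hjac : ∀ᶠ u in nhds 0, fderiv ℂ p u (1,0) * fderiv ℂ q u (0,1)
        - fderiv ℂ q u (1,0) * fderiv ℂ p u (0,1) = 1) :
    (∀ᶠ t in nhds (0:ℂ), F t = t) ∨ (∀ᶠ t in nhds (0:ℂ), F t = -t) := by
  set P1 : ℂ × ℂ → ℂ := fun u => fderiv ℂ p u (1,0) with hP1
  set P2 : ℂ × ℂ → ℂ := fun u => fderiv ℂ p u (0,1) with hP2
  set Q1 : ℂ × ℂ → ℂ := fun u => fderiv ℂ q u (1,0) with hQ1
  set Q2 : ℂ × ℂ → ℂ := fun u => fderiv ℂ q u (0,1) with hQ2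
  have hmc : Continuous (fun u : ℂ × ℂ => u.1 * u.2) := by fun_prop
  have hm0 : (fun u : ℂ × ℂ => u.1 * u.2) 0 = 0 := by simp
  have hFme : ∀ᶠ u in nhds (0 : ℂ × ℂ), AnalyticAt ℂ F (u.1 * u.2) := by
    have : Filter.Tendsto (fun u : ℂ × ℂ => u.1 * u.2) (nhds 0) (nhds 0) := by
      simpa [hm0] using hmc.tendsto 0
    exact this.eventually hF.eventually_analyticAt
  obtain ⟨S, hS, hSo, hS0⟩ := eventually_nhds_iff.mp hmul
  have key : ∀ᶠ u in nhds (0 : ℂ × ℂ),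
      (p u * q u = F (u.1 * u.2)) ∧
      (p u * Q1 u + q u * P1 u = deriv F (u.1 * u.2) * u.2) ∧
      (p u * Q2 u + q u * P2 u = deriv F (u.1 * u.2) * u.1) := by
    filter_upwards [hSo.eventually_mem hS0, hp.eventually_analyticAt,
      hq.eventually_analyticAt, hFme] with u huS hpu hqu hFu
    refine ⟨hS u huS, ?_⟩
    have heq : (fun x => p x * q x) =ᶠ[nhds u] fun x => F (x.1 * x.2) := by
      filter_upwards [hSo.eventually_mem huS] with x hx using hS x hx
    have hdl : HasFDerivAt (fun x => p x * q x)
        (p u • fderiv ℂ q u + q u • fderiv ℂ p u) u :=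
      hpu.differentiableAt.hasFDerivAt.mul hqu.differentiableAt.hasFDerivAt
    have hdm : HasFDerivAt (fun x : ℂ × ℂ => x.1 * x.2)
        (u.1 • snd ℂ ℂ ℂ + u.2 • fst ℂ ℂ ℂ) u :=
      hasFDerivAt_fst.mul hasFDerivAt_snd
    have hdF : HasDerivAt F (deriv F (u.1 * u.2)) (u.1 * u.2) :=
      hFu.differentiableAt.hasDerivAt
    have hdr : HasFDerivAt (fun x : ℂ × ℂ => F (x.1 * x.2))
        (deriv F (u.1 * u.2) • (u.1 • snd ℂ ℂ ℂ + u.2 • fst ℂ ℂ ℂ)) u :=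
      hdF.comp_hasFDerivAt u hdm
    have hfd : fderiv ℂ (fun x => p x * q x) u = fderiv ℂ (fun x : ℂ × ℂ => F (x.1 * x.2)) u :=
      heq.fderiv_eq
    rw [hdl.fderiv, hdr.fderiv] at hfd
    constructor
    · have := congrArg (fun L : ℂ × ℂ →L[ℂ] ℂ => L (1, 0)) hfd
      simpa [hP1, hQ1, smul_eq_mul, mul_comm] using this
    · have := congrArg (fun L : ℂ × ℂ →L[ℂ] ℂ => L (0, 1)) hfd
      simpa [hP2, hQ2, smul_eq_mul, mul_comm] using this
  -- stage 2 : pointwise ODE identity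
  have key2 : ∀ᶠ u in nhds (0 : ℂ × ℂ), q u ≠ 0 → deriv F (u.1 * u.2) ≠ 0 →
      u.1 * P1 u - u.2 * P2 u = p u * (deriv F (u.1 * u.2))⁻¹ := by
    filter_upwards [key, hjac] with u hk hj hqu hdu
    obtain ⟨e1, e2, e3⟩ := hk
    have hKey : q u * (deriv F (u.1 * u.2) * (u.1 * P1 u - u.2 * P2 u) - p u) = 0 := by
      linear_combination (deriv F (u.1 * u.2) * u.1 - p u * Q2 u) * e2
        + (p u * Q1 u - deriv F (u.1 * u.2) * u.2) * e3 + p u * q u * hj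
    have h2 : deriv F (u.1 * u.2) * (u.1 * P1 u - u.2 * P2 u) - p u = 0 :=
      by
        rcases mul_eq_zero.mp hKey with h | h
        · exact absurd h hqu
        · exact h
    field_simp
    linear_combination h2

  -- sign of the derivative at 0
  have hd0pm : deriv F 0 = 1 ∨ deriv F 0 = -1 := by
    apply axis_sign p q F hp hq hF hp0 hq0 hF0 hF'0 hmul _ hjac
    filter_upwards [key] with u hu
    exact ⟨hu.1, hu.2.1, hu.2.2⟩
  -- continuity facts for deriv F
  have hdc : ContinuousAt (deriv F) 0 := by
    have h1 : ContinuousAt (fderiv ℂ F) 0 := hF.fderiv.continuousAt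
    have h2 : ContinuousAt (fun t => fderiv ℂ F t 1) 0 :=
      (ContinuousLinearMap.apply ℂ ℂ (1:ℂ)).continuous.continuousAt.comp h1
    have h3 : (fun t => fderiv ℂ F t 1) = deriv F := by
      funext t; rw [fderiv_apply_one_eq_deriv]
    rwa [h3] at h2
  have hdne : ∀ᶠ t in nhds (0:ℂ), deriv F t ≠ 0 := hdc.eventually_ne hF'0
  have hFne : ∀ᶠ t in nhdsWithin 0 {(0:ℂ)}ᶜ, F t ≠ 0 := by
    rcases hF.eventually_eq_zero_or_eventually_ne_zero with h1 | h1
    · exfalso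
      have h2 : deriv F 0 = deriv (fun _ : ℂ => (0:ℂ)) 0 := Filter.EventuallyEq.deriv_eq h1
      rw [deriv_const] at h2
      exact hF'0 h2
    · exact h1
  -- choose a ball where everything pointwise holds
  have hdiffp : ∀ᶠ u in nhds (0 : ℂ × ℂ), DifferentiableAt ℂ p u := by
    filter_upwards [hp.eventually_analyticAt] with u hu using hu.differentiableAt
  obtain ⟨ε, hε, hball⟩ := Metric.eventually_nhds_iff_ball.mp
    ((hdiffp.and hmul).and key2)
  -- integrality of 1/deriv F on a punctured neighborhood
  have hint : ∀ᶠ t in nhdsWithin 0 {(0:ℂ)}ᶜ, ∃ n : ℤ, (deriv F t)⁻¹ = n := by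
    have hsmall : ∀ᶠ t in nhds (0:ℂ), Real.sqrt ‖t‖ < ε := by
      have h1 : ∀ᶠ t in nhds (0:ℂ), ‖t‖ < ε ^ 2 := by
        have := Metric.ball_mem_nhds (0:ℂ) (show (0:ℝ) < ε ^ 2 by positivity)
        filter_upwards [this] with t ht
        simpa [Metric.mem_ball, dist_eq_norm] using ht
      filter_upwards [h1] with t ht
      rw [show ε = Real.sqrt (ε ^ 2) by rw [Real.sqrt_sq hε.le]]
      exact Real.sqrt_lt_sqrt (norm_nonneg t) ht
    filter_upwards [hsmall.filter_mono nhdsWithin_le_nhds,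
      hdne.filter_mono nhdsWithin_le_nhds, hFne, self_mem_nhdsWithin] with t h1 h2 h3 h4
    apply loop_integer p q F ε _ _ _ t h4 h1 h3 h2
    · intro u hu; exact ((hball u (by simpa [Metric.mem_ball, dist_eq_norm] using hu)).1).1
    · intro u hu; exact ((hball u (by simpa [Metric.mem_ball, dist_eq_norm] using hu)).1).2
    · intro u hu hqu hdu
      exact (hball u (by simpa [Metric.mem_ball, dist_eq_norm] using hu)).2 hqu hdu
  have hlin := const_deriv F hF hF0 hF'0 hint
  rcases hd0pm with h | h
  · left; filter_upwards [hlin] with t ht; rw [ht, h, one_mul]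
  · right; filter_upwards [hlin] with t ht; rw [ht, h]; ring

lemma exists_localInverse {E : Type*} [NormedAddCommGroup E] [NormedSpace ℂ E] [CompleteSpace E]
    (f : E → E) (hf : AnalyticAt ℂ f 0) (h0 : f 0 = 0) (e : E ≃L[ℂ] E)
    (he : fderiv ℂ f 0 = e) :
    ∃ g : E → E, AnalyticAt ℂ g 0 ∧ g 0 = 0 ∧ (∀ᶠ x in nhds 0, g (f x) = x) ∧
      (∀ᶠ y in nhds 0, f (g y) = y) := by
  have hd : HasFDerivAt f (e : E →L[ℂ] E) 0 := by
    rw [← he]; exact hf.differentiableAt.hasFDerivAt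
  have hs : HasStrictFDerivAt f (e : E →L[ℂ] E) 0 :=
    (hf.contDiffAt (n := 1)).hasStrictFDerivAt' hd one_ne_zero
  set PH := HasStrictFDerivAt.toOpenPartialHomeomorph (f := f) (hf := hs) with hPH
  have hcoe : ⇑PH = f := HasStrictFDerivAt.toOpenPartialHomeomorph_coe (hf := hs)
  have hsrc : (0 : E) ∈ PH.source := HasStrictFDerivAt.mem_toOpenPartialHomeomorph_source (hf := hs)
  refine ⟨PH.symm, ?_, ?_, ?_, ?_⟩
  · have ha : AnalyticAt ℂ PH 0 := by rw [hcoe]; exact hf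
    have := PH.analyticAt_symm' hsrc ha (by rw [hcoe, he])
    rwa [hcoe, h0] at this
  · have := HasStrictFDerivAt.localInverse_apply_image (hf := hs)
    rwa [HasStrictFDerivAt.localInverse_def (hf := hs), h0] at this
  · have := HasStrictFDerivAt.eventually_left_inverse (hf := hs)
    rwa [HasStrictFDerivAt.localInverse_def (hf := hs)] at this
  · have := HasStrictFDerivAt.eventually_right_inverse (hf := hs)
    rwa [HasStrictFDerivAt.localInverse_def (hf := hs), h0] at this

lemma clmDet_comp (L M : ℂ × ℂ →L[ℂ] ℂ × ℂ) :
    clmDet (L.comp M) = clmDet L * clmDet M := by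
  simp only [clmDet, ContinuousLinearMap.comp_apply]
  rw [clm_apply_decomp L (M (1,0)), clm_apply_decomp L (M (0,1))]
  simp only [Prod.fst_add, Prod.snd_add, Prod.smul_fst, Prod.smul_snd, smul_eq_mul]
  ring

lemma exists_clequiv (L : ℂ × ℂ →L[ℂ] ℂ × ℂ) (h : clmDet L ≠ 0) :
    ∃ e : (ℂ × ℂ) ≃L[ℂ] (ℂ × ℂ), (e : (ℂ × ℂ) →L[ℂ] (ℂ × ℂ)) = L := by
  set a := (L (1, 0)).1; set c := (L (1, 0)).2; set b := (L (0, 1)).1; set d := (L (0, 1)).2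
  have hΔ : a * d - b * c ≠ 0 := h
  set Δ := a * d - b * c with hΔdef
  set N : ℂ × ℂ →L[ℂ] ℂ × ℂ :=
    (((d / Δ) • (fst ℂ ℂ ℂ) - (b / Δ) • (snd ℂ ℂ ℂ)).prod
      (((-c / Δ) • (fst ℂ ℂ ℂ) + (a / Δ) • (snd ℂ ℂ ℂ)))) with hN
  have hNv : ∀ v : ℂ × ℂ, N v = ((d / Δ) * v.1 - (b / Δ) * v.2,
      (-c / Δ) * v.1 + (a / Δ) * v.2) := by
    intro v; simp [hN, Prod.ext_iff, mul_comm]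
  have hLv : ∀ v : ℂ × ℂ, L v = (a * v.1 + b * v.2, c * v.1 + d * v.2) := by
    intro v
    rw [clm_apply_decomp L v]
    simp [Prod.ext_iff, a, b, c, d]; constructor <;> ring
  have h₁ : Function.LeftInverse N L := by
    intro v; rw [hLv v, hNv]; simp only [Prod.ext_iff]
    constructor <;> (field_simp; ring)
  have h₂ : Function.RightInverse N L := by
    intro v; rw [hNv v, hLv]; simp only [Prod.ext_iff]
    constructor <;> (field_simp; ring)
  exact ⟨ContinuousLinearEquiv.equivOfInverse L N h₁ h₂, rfl⟩


lemma exists_clequiv1 (f : ℂ → ℂ) (hd : deriv f 0 ≠ 0) :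
    ∃ e : ℂ ≃L[ℂ] ℂ, (e : ℂ →L[ℂ] ℂ) = fderiv ℂ f 0 := by
  refine ⟨ContinuousLinearEquiv.unitsEquivAut ℂ (Units.mk0 (deriv f 0) hd), ?_⟩
  apply ContinuousLinearMap.ext_ring
  show (1 : ℂ) • (deriv f 0) = fderiv ℂ f 0 1
  rw [fderiv_apply_one_eq_deriv]
  simp

/-- **Birkhoff–Siegel normal form, uniqueness.**
If a Morse germ `H` at `0 ∈ ℂ²` is brought to the forms `G (u₁u₂)` and `G̃ (u₁u₂)`
by two analytic unimodular (Jacobian determinant ≡ 1) changes of coordinates fixing `0`,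
then `G̃ = G` near `0`, or `G̃ (h) = G (-h)` near `0`. -/
theorem birkhoff_siegel_uniqueness
    (H : ℂ × ℂ → ℂ) (U : Set (ℂ × ℂ)) (hU : IsOpen U) (hU0 : (0 : ℂ × ℂ) ∈ U)
    (hH : AnalyticOnNhd ℂ H U)
    (hH0 : H 0 = 0)
    (hDH0 : fderiv ℂ H 0 = 0)
    (hHess : hessDet H 0 ≠ 0)
    (Φ Φ' : ℂ × ℂ → ℂ × ℂ) (V V' : Set (ℂ × ℂ))
    (hV : IsOpen V) (hV0 : (0 : ℂ × ℂ) ∈ V)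
    (hV' : IsOpen V') (hV'0 : (0 : ℂ × ℂ) ∈ V')
    (hΦ : AnalyticOnNhd ℂ Φ V) (hΦ0 : Φ 0 = 0)
    (hΦ' : AnalyticOnNhd ℂ Φ' V') (hΦ'0 : Φ' 0 = 0)
    (hjac : ∀ u ∈ V, jacDet Φ u = 1)
    (hjac' : ∀ u ∈ V', jacDet Φ' u = 1)
    (G G' : ℂ → ℂ) (W W' : Set ℂ)
    (hW : IsOpen W) (hW0 : (0 : ℂ) ∈ W)
    (hW' : IsOpen W') (hW'0 : (0 : ℂ) ∈ W')
    (hG : AnalyticOnNhd ℂ G W) (hG0 : G 0 = 0) (hG'deriv : deriv G 0 ≠ 0)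
    (hG' : AnalyticOnNhd ℂ G' W') (hG'0 : G' 0 = 0) (hG''deriv : deriv G' 0 ≠ 0)
    (hEq : ∀ u ∈ V, H (Φ u) = G (u.1 * u.2))
    (hEq' : ∀ u ∈ V', H (Φ' u) = G' (u.1 * u.2)) :
    (∀ᶠ h in nhds (0 : ℂ), G' h = G h) ∨ (∀ᶠ h in nhds (0 : ℂ), G' h = G (-h)) := by
  have hΦa : AnalyticAt ℂ Φ 0 := hΦ 0 hV0
  have hΦ'a : AnalyticAt ℂ Φ' 0 := hΦ' 0 hV'0
  have hGa : AnalyticAt ℂ G 0 := hG 0 hW0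
  have hG'a : AnalyticAt ℂ G' 0 := hG' 0 hW'0
  -- local inverse of Φ'
  have hjd : clmDet (fderiv ℂ Φ' 0) ≠ 0 := by
    have h : clmDet (fderiv ℂ Φ' 0) = jacDet Φ' 0 := rfl
    rw [h, hjac' 0 hV'0]
    exact one_ne_zero
  obtain ⟨e, he⟩ := exists_clequiv (fderiv ℂ Φ' 0) hjd
  obtain ⟨Φi, hΦia, hΦi0, hΦiL, hΦiR⟩ := exists_localInverse Φ' hΦ'a hΦ'0 e he.symm
  -- local inverse of G'
  obtain ⟨e1, he1⟩ := exists_clequiv1 G' hG''deriv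
  obtain ⟨Gi, hGia, hGi0, hGiL, hGiR⟩ := exists_localInverse G' hG'a hG'0 e1 he1.symm
  -- definitions
  set Ψ : ℂ × ℂ → ℂ × ℂ := fun u => Φi (Φ u) with hΨ
  set p : ℂ × ℂ → ℂ := fun u => (Ψ u).1 with hpdef
  set q : ℂ × ℂ → ℂ := fun u => (Ψ u).2 with hqdef
  set F : ℂ → ℂ := fun t => Gi (G t) with hFdef
  have hΨa : AnalyticAt ℂ Ψ 0 := hΦia.comp_of_eq hΦa hΦ0
  have hΨ0 : Ψ 0 = 0 := by rw [hΨ]; simp only; rw [hΦ0, hΦi0]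
  have hpa : AnalyticAt ℂ p 0 :=
    ((ContinuousLinearMap.fst ℂ ℂ ℂ).analyticAt _).comp_of_eq hΨa rfl
  have hqa : AnalyticAt ℂ q 0 :=
    ((ContinuousLinearMap.snd ℂ ℂ ℂ).analyticAt _).comp_of_eq hΨa rfl
  have hp0 : p 0 = 0 := by rw [hpdef]; simp only; rw [hΨ0]; rfl
  have hq0 : q 0 = 0 := by rw [hqdef]; simp only; rw [hΨ0]; rfl
  have hFa : AnalyticAt ℂ F 0 := hGia.comp_of_eq hGa hG0
  have hF0 : F 0 = 0 := by rw [hFdef]; simp only; rw [hG0, hGi0]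
  -- tendsto facts
  have hΦt : Filter.Tendsto Φ (nhds 0) (nhds 0) := by
    have := hΦa.continuousAt.tendsto; rwa [hΦ0] at this
  have hΨt : Filter.Tendsto Ψ (nhds 0) (nhds 0) := by
    have := hΨa.continuousAt.tendsto; rwa [hΨ0] at this
  have hGt : Filter.Tendsto G (nhds 0) (nhds 0) := by
    have := hGa.continuousAt.tendsto; rwa [hG0] at this
  -- Φ' ∘ Ψ = Φ near 0, G' ∘ F = G near 0
  have h1 : ∀ᶠ u in nhds (0 : ℂ × ℂ), Φ' (Ψ u) = Φ u := hΦt.eventually hΦiR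
  have h4 : ∀ᶠ t in nhds (0 : ℂ), G' (F t) = G t := hGt.eventually hGiR
  -- p u * q u = F (u1 u2) near 0
  have h2 : ∀ᶠ u in nhds (0 : ℂ × ℂ), p u * q u = F (u.1 * u.2) := by
    have hmt : Filter.Tendsto (fun u : ℂ × ℂ => p u * q u) (nhds 0) (nhds 0) := by
      have hc : ContinuousAt (fun u : ℂ × ℂ => p u * q u) 0 :=
        hpa.continuousAt.mul hqa.continuousAt
      have := hc.tendsto
      rwa [hp0, hq0, mul_zero] at this
    have hGp : ∀ᶠ u in nhds (0 : ℂ × ℂ), Gi (G' (p u * q u)) = p u * q u :=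
      hmt.eventually hGiL
    filter_upwards [h1, hΨt.eventually (hV'.eventually_mem hV'0),
      hV.eventually_mem hV0, hGp] with u hu1 hu2 hu3 hu4
    have hA : H (Φ' (Ψ u)) = G' ((Ψ u).1 * (Ψ u).2) := hEq' (Ψ u) hu2
    have hB : H (Φ u) = G (u.1 * u.2) := hEq u hu3
    rw [hu1, hB] at hA
    rw [← hu4, ← hA]
  -- jacobian identity for (p, q)
  have h3 : ∀ᶠ u in nhds (0 : ℂ × ℂ), fderiv ℂ p u (1,0) * fderiv ℂ q u (0,1)
      - fderiv ℂ q u (1,0) * fderiv ℂ p u (0,1) = 1 := by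
    obtain ⟨S, hS, hSo, hS0⟩ := eventually_nhds_iff.mp h1
    filter_upwards [hSo.eventually_mem hS0, hΨa.eventually_analyticAt,
      hΨt.eventually hΦ'a.eventually_analyticAt,
      hΨt.eventually (hV'.eventually_mem hV'0),
      hV.eventually_mem hV0] with u huS hΨu hΦ'u huV' huV
    have heq : (fun x => Φ' (Ψ x)) =ᶠ[nhds u] Φ := by
      filter_upwards [hSo.eventually_mem huS] with x hx using hS x hx
    have hfd : fderiv ℂ (fun x => Φ' (Ψ x)) u = fderiv ℂ Φ u :=
      Filter.EventuallyEq.fderiv_eq heq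
    have hcomp : fderiv ℂ (Φ' ∘ Ψ) u = (fderiv ℂ Φ' (Ψ u)).comp (fderiv ℂ Ψ u) :=
      fderiv_comp (x := u) hΦ'u.differentiableAt hΨu.differentiableAt
    have hdet : clmDet (fderiv ℂ Φ u)
        = clmDet (fderiv ℂ Φ' (Ψ u)) * clmDet (fderiv ℂ Ψ u) := by
      rw [← hfd]
      have : fderiv ℂ (fun x => Φ' (Ψ x)) u = (fderiv ℂ Φ' (Ψ u)).comp (fderiv ℂ Ψ u) := hcomp
      rw [this, clmDet_comp]
    have hdΦ : clmDet (fderiv ℂ Φ u) = 1 := hjac u huV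
    have hdΦ' : clmDet (fderiv ℂ Φ' (Ψ u)) = 1 := hjac' (Ψ u) huV'
    rw [hdΦ, hdΦ', one_mul] at hdet
    -- express fderiv of p, q through fderiv of Ψ
    have hfp : fderiv ℂ p u = (ContinuousLinearMap.fst ℂ ℂ ℂ).comp (fderiv ℂ Ψ u) := by
      have h := fderiv_comp (g := ⇑(ContinuousLinearMap.fst ℂ ℂ ℂ)) (f := Ψ) (x := u)
        ((ContinuousLinearMap.fst ℂ ℂ ℂ).differentiableAt) hΨu.differentiableAt
      rwa [(ContinuousLinearMap.fst ℂ ℂ ℂ).fderiv] at h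
    have hfq : fderiv ℂ q u = (ContinuousLinearMap.snd ℂ ℂ ℂ).comp (fderiv ℂ Ψ u) := by
      have h := fderiv_comp (g := ⇑(ContinuousLinearMap.snd ℂ ℂ ℂ)) (f := Ψ) (x := u)
        ((ContinuousLinearMap.snd ℂ ℂ ℂ).differentiableAt) hΨu.differentiableAt
      rwa [(ContinuousLinearMap.snd ℂ ℂ ℂ).fderiv] at h
    rw [hfp, hfq]
    simp only [ContinuousLinearMap.comp_apply, ContinuousLinearMap.coe_fst',
      ContinuousLinearMap.coe_snd']
    simp only [clmDet] at hdet
    linear_combination -hdet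
  -- nonvanishing derivative of F at 0
  have hF'0 : deriv F 0 ≠ 0 := by
    have hda : deriv (fun t => G' (F t)) 0 = deriv G 0 := Filter.EventuallyEq.deriv_eq h4
    have hG'd : HasDerivAt G' (deriv G' 0) (F 0) := by
      rw [hF0]; exact hG'a.differentiableAt.hasDerivAt
    have hcd : HasDerivAt (fun t => G' (F t)) (deriv G' 0 * deriv F 0) 0 :=
      hG'd.comp 0 hFa.differentiableAt.hasDerivAt
    have hmul : deriv G' 0 * deriv F 0 = deriv G 0 := by rw [← hcd.deriv]; exact hda
    intro h0
    rw [h0, mul_zero] at hmul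
    exact hG'deriv hmul.symm
  rcases core p q F hpa hqa hFa hp0 hq0 hF0 hF'0 h2 h3 with hFt | hFt
  · left
    filter_upwards [h4, hFt] with t ht hFtt
    rw [hFtt] at ht
    exact ht
  · right
    have hQ : ∀ᶠ t in nhds (0:ℂ), G' (-t) = G t := by
      filter_upwards [h4, hFt] with t ht hFtt
      rw [hFtt] at ht
      exact ht
    have hneg : Filter.Tendsto (fun h : ℂ => -h) (nhds 0) (nhds 0) := by
      simpa using (continuous_neg.tendsto (0:ℂ))
    filter_upwards [hneg.eventually hQ] with h hh
    simpa using hh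

end BSU
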